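/- (Key lemma, abstract form.) In the abstract setting, assume in addition the minimality condition: K equals the closed linear span of { N₁*^{α₁} N₂*^{α₂} N₃*^{α₃} h : h ∈ H, α₁, α₂, α₃ ∈ ℕ }. Let A be a bounded linear operator on H satisfying A T₁ = T₂* A T₃, A T₂ = T₁* A T₃, and T₃* A T₃ = A. Then there exists a bounded linear operator X on K such that P X|_H = A (i.e., for all h ∈ H, A h equals the orthogonal projection of X h onto H), X Nᵢ = Nᵢ X for i = 1, 2, 3, and ‖X‖ = ‖A‖. -/

import Mathlib

open ContinuousLinearMap Filter Topology

/-- The restriction of a continuous linear operator to an invariant subspace, as a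
continuous linear operator on that subspace. -/
noncomputable def restrictCLM {K : Type*} [NormedAddCommGroup K] [InnerProductSpace ℂ K]
    (N : K →L[ℂ] K) (H : Submodule ℂ K) (hN : ∀ x ∈ H, N x ∈ H) : H →L[ℂ] H where
  toFun x := ⟨N x, hN x x.2⟩
  map_add' x y := by ext; simp
  map_smul' c x := by ext; simp
  cont := (N.continuous.comp continuous_subtype_val).subtype_mk _

set_option maxHeartbeats 4000000 in
theorem key_lemma_brownHalmos
    {K : Type*} [NormedAddCommGroup K] [InnerProductSpace ℂ K] [CompleteSpace K]
    (N₁ N₂ N₃ : K →L[ℂ] K)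
    -- the tuple is commuting
    (hc : ∀ M ∈ ({N₁, N₂, N₃} : Set (K →L[ℂ] K)), ∀ M' ∈ ({N₁, N₂, N₃} : Set (K →L[ℂ] K)),
      M * M' = M' * M)
    -- each `Nᵢ` is normal and the commutation extends to adjoints
    (hcadj : ∀ M ∈ ({N₁, N₂, N₃} : Set (K →L[ℂ] K)), ∀ M' ∈ ({N₁, N₂, N₃} : Set (K →L[ℂ] K)),
      M * adjoint M' = adjoint M' * M)
    (hU₁ : adjoint N₃ * N₃ = 1) (hU₂ : N₃ * adjoint N₃ = 1)
    (hrel₁ : N₁ = adjoint N₂ * N₃) (hrel₂ : N₂ = adjoint N₁ * N₃)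
    -- `H` is a closed subspace invariant under `N₁, N₂, N₃`
    (H : Submodule ℂ K) (hH : IsClosed (H : Set K)) [CompleteSpace H]
    (hinv₁ : ∀ x ∈ H, N₁ x ∈ H) (hinv₂ : ∀ x ∈ H, N₂ x ∈ H) (hinv₃ : ∀ x ∈ H, N₃ x ∈ H)
    -- minimality: `K` is the closed linear span of `N₁*^α₁ N₂*^α₂ N₃*^α₃ h`, `h ∈ H`
    (hmin : (Submodule.span ℂ {x : K | ∃ h ∈ H, ∃ α₁ α₂ α₃ : ℕ,
      x = (adjoint N₁ ^ α₁) ((adjoint N₂ ^ α₂) ((adjoint N₃ ^ α₃) h))}).topologicalClosure = ⊤)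
    -- `A` satisfies the Brown–Halmos type relations with `Tᵢ = Nᵢ|_H`
    (A : H →L[ℂ] H)
    (hA₁ : A * restrictCLM N₁ H hinv₁ =
      adjoint (restrictCLM N₂ H hinv₂) * A * restrictCLM N₃ H hinv₃)
    (hA₂ : A * restrictCLM N₂ H hinv₂ =
      adjoint (restrictCLM N₁ H hinv₁) * A * restrictCLM N₃ H hinv₃)
    (hA₃ : adjoint (restrictCLM N₃ H hinv₃) * A * restrictCLM N₃ H hinv₃ = A) :
    ∃ X : K →L[ℂ] K,
      (∀ h : H, Submodule.orthogonalProjectionOnto H (X h) = A h) ∧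
      X * N₁ = N₁ * X ∧ X * N₂ = N₂ * X ∧ X * N₃ = N₃ * X ∧ ‖X‖ = ‖A‖ := by
  classical
  set T₁ := restrictCLM N₁ H hinv₁ with hT₁def
  set T₂ := restrictCLM N₂ H hinv₂ with hT₂def
  set T₃ := restrictCLM N₃ H hinv₃ with hT₃def
  -- membership helpers
  have m1 : N₁ ∈ ({N₁, N₂, N₃} : Set (K →L[ℂ] K)) := by left; rfl
  have m2 : N₂ ∈ ({N₁, N₂, N₃} : Set (K →L[ℂ] K)) := by right; left; rfl
  have m3 : N₃ ∈ ({N₁, N₂, N₃} : Set (K →L[ℂ] K)) := by right; right; rfl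
  have hc13 : N₁ * N₃ = N₃ * N₁ := hc N₁ m1 N₃ m3
  have hc23 : N₂ * N₃ = N₃ * N₂ := hc N₂ m2 N₃ m3
  have ha1V : N₁ * adjoint N₃ = adjoint N₃ * N₁ := hcadj N₁ m1 N₃ m3
  have ha2V : N₂ * adjoint N₃ = adjoint N₃ * N₂ := hcadj N₂ m2 N₃ m3
  -- pointwise composition identities
  have hVU : ∀ x : K, adjoint N₃ (N₃ x) = x := by
    intro x
    have := congrFun (congrArg DFunLike.coe hU₁) x
    simpa [ContinuousLinearMap.mul_apply] using this
  have hUV : ∀ x : K, N₃ (adjoint N₃ x) = x := by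
    intro x
    have := congrFun (congrArg DFunLike.coe hU₂) x
    simpa [ContinuousLinearMap.mul_apply] using this
  -- inner ℂ product preservation
  have hinner_U : ∀ x y : K, (inner ℂ (N₃ x) (N₃ y) : ℂ) = inner ℂ x y := by
    intro x y
    have h := adjoint_inner_left N₃ y (N₃ x)
    rw [hVU x] at h
    exact h.symm
  have hinner_V : ∀ x y : K, (inner ℂ (adjoint N₃ x) (adjoint N₃ y) : ℂ) = inner ℂ x y := by
    intro x y
    have h := adjoint_inner_left N₃ (adjoint N₃ y) x
    rw [hUV y] at h
    exact h
  have hinner_Vn : ∀ (n : ℕ) (x y : K),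
      (inner ℂ ((adjoint N₃ ^ n) x) ((adjoint N₃ ^ n) y) : ℂ) = inner ℂ x y := by
    intro n
    induction n with
    | zero => intro x y; simp
    | succ k ih =>
      intro x y
      rw [pow_succ]
      simp only [ContinuousLinearMap.mul_apply]
      rw [ih]
      exact hinner_V x y
  have hnorm_U : ∀ (n : ℕ) (x : K), ‖(N₃ ^ n) x‖ = ‖x‖ := by
    intro n
    induction n with
    | zero => intro x; simp
    | succ k ih =>
      intro x
      rw [pow_succ]
      simp only [ContinuousLinearMap.mul_apply]
      have : (inner ℂ (N₃ x) (N₃ x) : ℂ) = inner ℂ x x := hinner_U x x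
      rw [inner_self_eq_norm_sq_to_K, inner_self_eq_norm_sq_to_K] at this
      have h2 : ‖N₃ x‖ = ‖x‖ := by
        have h3 : (‖N₃ x‖ : ℝ) ^ 2 = ‖x‖ ^ 2 := by exact_mod_cast this
        nlinarith [norm_nonneg (N₃ x), norm_nonneg x]
      rw [ih, h2]
  have hnorm_V : ∀ (n : ℕ) (x : K), ‖(adjoint N₃ ^ n) x‖ = ‖x‖ := by
    intro n x
    have : (inner ℂ ((adjoint N₃ ^ n) x) ((adjoint N₃ ^ n) x) : ℂ) = inner ℂ x x := hinner_Vn n x x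
    rw [inner_self_eq_norm_sq_to_K, inner_self_eq_norm_sq_to_K] at this
    have h3 : (‖(adjoint N₃ ^ n) x‖ : ℝ) ^ 2 = ‖x‖ ^ 2 := by exact_mod_cast this
    nlinarith [norm_nonneg ((adjoint N₃ ^ n) x), norm_nonneg x]
  -- adjoint of powers
  have hadj_pow : ∀ n : ℕ, adjoint (N₃ ^ n) = adjoint N₃ ^ n := by
    intro n; rw [← star_eq_adjoint, ← star_eq_adjoint, star_pow]
  have hVadj : ∀ (n : ℕ) (x y : K), (inner ℂ ((adjoint N₃ ^ n) x) y : ℂ) = inner ℂ x ((N₃ ^ n) y) := by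
    intro n x y
    rw [← hadj_pow]
    exact adjoint_inner_left (N₃ ^ n) y x
  -- N₃^N ∘ V^a = N₃^(N-a) for a ≤ N, pointwise
  have hUVpow : ∀ (a : ℕ) (x : K), (N₃ ^ a) ((adjoint N₃ ^ a) x) = x := by
    intro a
    induction a with
    | zero => intro x; simp
    | succ k ih =>
      intro x
      rw [pow_succ, pow_succ']
      simp only [ContinuousLinearMap.mul_apply]
      rw [hUV ((adjoint N₃ ^ k) x), ih]
  have hcancel : ∀ (a N : ℕ), a ≤ N → ∀ x : K,
      (N₃ ^ N) ((adjoint N₃ ^ a) x) = (N₃ ^ (N - a)) x := by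
    intro a N h x
    conv_lhs => rw [← Nat.sub_add_cancel h, pow_add]
    simp only [ContinuousLinearMap.mul_apply]
    rw [hUVpow]
  -- restriction lemmas
  have hcoe₁ : ∀ w : H, ((T₁ w : K)) = N₁ (w : K) := fun w => rfl
  have hcoe₂ : ∀ w : H, ((T₂ w : K)) = N₂ (w : K) := fun w => rfl
  have hcoe₃ : ∀ w : H, ((T₃ w : K)) = N₃ (w : K) := fun w => rfl
  have hcoe₃n : ∀ (n : ℕ) (w : H), (((T₃ ^ n) w : K)) = (N₃ ^ n) (w : K) := by
    intro n
    induction n with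
    | zero => intro w; simp
    | succ k ih =>
      intro w
      rw [pow_succ, pow_succ]
      simp only [ContinuousLinearMap.mul_apply]
      rw [ih (T₃ w), hcoe₃]
  -- projection lemmas
  have hPr_coe : ∀ w : H, Submodule.orthogonalProjectionOnto H (w : K) = w := fun w =>
    Submodule.orthogonalProjectionOnto_mem_subspace_eq_self w
  have hPr_mem : ∀ x : K, x ∈ H → ((Submodule.orthogonalProjectionOnto H x : K)) = x := by
    intro x hx
    have := hPr_coe ⟨x, hx⟩
    rw [show ((⟨x, hx⟩ : H) : K) = x from rfl] at this
    exact congrArg Subtype.val this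
  have hPr_norm : ∀ x : K, ‖(Submodule.orthogonalProjectionOnto H x : H)‖ ≤ ‖x‖ := by
    intro x
    calc ‖(Submodule.orthogonalProjectionOnto H x : H)‖ ≤ ‖Submodule.orthogonalProjectionOnto H‖ * ‖x‖ :=
          (Submodule.orthogonalProjectionOnto H).le_opNorm x
      _ ≤ 1 * ‖x‖ := by
          have := Submodule.orthogonalProjectionOnto_norm_le H
          have hx := norm_nonneg x
          nlinarith
      _ = ‖x‖ := one_mul _
  -- the approximating operators
  set B : K →L[ℂ] K := H.subtypeL ∘L (A ∘L (Submodule.orthogonalProjectionOnto H : K →L[ℂ] H)) with hBdef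
  have hBapp : ∀ w : H, B (w : K) = ((A w : K)) := by
    intro w
    simp only [hBdef, ContinuousLinearMap.comp_apply, Submodule.subtypeL_apply]
    rw [hPr_coe]
  set Xn : ℕ → K →L[ℂ] K := fun n => (adjoint N₃ ^ n) ∘L (B ∘L (N₃ ^ n)) with hXndef
  have hXnapp : ∀ (n : ℕ) (x : K), Xn n x = (adjoint N₃ ^ n) (B ((N₃ ^ n) x)) := fun n x => rfl
  have hXn_bound : ∀ (n : ℕ) (x : K), ‖Xn n x‖ ≤ ‖A‖ * ‖x‖ := by
    intro n x
    rw [hXnapp, hnorm_V]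
    calc ‖B ((N₃ ^ n) x)‖ = ‖A (Submodule.orthogonalProjectionOnto H ((N₃ ^ n) x))‖ := by
          simp only [hBdef, ContinuousLinearMap.comp_apply, Submodule.subtypeL_apply]; rfl
      _ ≤ ‖A‖ * ‖(Submodule.orthogonalProjectionOnto H ((N₃ ^ n) x) : H)‖ := A.le_opNorm _
      _ ≤ ‖A‖ * ‖(N₃ ^ n) x‖ := by
          have := hPr_norm ((N₃ ^ n) x)
          have hA0 := norm_nonneg A
          nlinarith
      _ = ‖A‖ * ‖x‖ := by rw [hnorm_U]
  -- iterated Toeplitz condition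
  have hA₃k : ∀ k : ℕ, adjoint (T₃ ^ k) * A * (T₃ ^ k) = A := by
    intro k
    induction k with
    | zero => simp only [pow_zero, mul_one]; rw [← star_eq_adjoint, star_one, one_mul]
    | succ n ih =>
      have hadj : adjoint (T₃ ^ (n + 1)) = adjoint T₃ * adjoint (T₃ ^ n) := by
        rw [pow_succ, ← star_eq_adjoint, ← star_eq_adjoint, ← star_eq_adjoint, star_mul]
      rw [hadj, pow_succ]
      have : adjoint T₃ * adjoint (T₃ ^ n) * A * (T₃ ^ n * T₃)
          = adjoint T₃ * (adjoint (T₃ ^ n) * A * T₃ ^ n) * T₃ := by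
        simp only [mul_assoc]
      rw [this, ih, hA₃]
  have hA₃k' : ∀ (k : ℕ) (w : H), adjoint (T₃ ^ k) (A ((T₃ ^ k) w)) = A w := by
    intro k w
    have := congrFun (congrArg DFunLike.coe (hA₃k k)) w
    simpa [ContinuousLinearMap.mul_apply] using this
  -- Toeplitz inner ℂ product identity
  have hToe : ∀ (k m : ℕ) (h : H),
      (inner ℂ (A ((T₃ ^ (m + k)) h)) ((T₃ ^ k) (A ((T₃ ^ m) h))) : ℂ)
        = inner ℂ (A ((T₃ ^ m) h)) (A ((T₃ ^ m) h)) := by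
    intro k m h
    have h1 : (T₃ ^ (m + k)) h = (T₃ ^ k) ((T₃ ^ m) h) := by
      rw [add_comm, pow_add]
      simp [ContinuousLinearMap.mul_apply]
    rw [h1, ← adjoint_inner_left (T₃ ^ k), hA₃k' k ((T₃ ^ m) h)]
  -- T₃ is an isometry on H
  have hT₃iso : ∀ (n : ℕ) (w : H), ‖(T₃ ^ n) w‖ = ‖w‖ := by
    intro n w
    rw [show ‖(T₃ ^ n) w‖ = ‖(((T₃ ^ n) w : K))‖ from rfl, hcoe₃n, hnorm_U]
    rfl
  -- monotonicity of m ↦ ‖A (T₃^m h)‖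
  have hgmono : ∀ (h : H), Monotone (fun m => ‖A ((T₃ ^ m) h)‖) := by
    intro h
    apply monotone_nat_of_le_succ
    intro m
    have h1 := hToe 1 m h
    have h2 : RCLike.re (inner ℂ (A ((T₃ ^ (m + 1)) h)) ((T₃ ^ 1) (A ((T₃ ^ m) h))) : ℂ)
        ≤ ‖A ((T₃ ^ (m + 1)) h)‖ * ‖(T₃ ^ 1) (A ((T₃ ^ m) h))‖ := re_inner_le_norm _ _
    rw [h1, inner_self_eq_norm_sq, hT₃iso 1] at h2
    nlinarith [norm_nonneg (A ((T₃ ^ m) h)), norm_nonneg (A ((T₃ ^ (m + 1)) h))]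
  have hgbdd : ∀ (h : H) (m : ℕ), ‖A ((T₃ ^ m) h)‖ ≤ ‖A‖ * ‖h‖ := by
    intro h m
    calc ‖A ((T₃ ^ m) h)‖ ≤ ‖A‖ * ‖(T₃ ^ m) h‖ := A.le_opNorm _
      _ = ‖A‖ * ‖h‖ := by rw [hT₃iso]
  -- key formula for Xn on generators
  have hXform : ∀ (h : H) (a N : ℕ), a ≤ N →
      Xn N ((adjoint N₃ ^ a) (h : K)) = (adjoint N₃ ^ N) ((A ((T₃ ^ (N - a)) h) : K)) := by
    intro h a N haN
    rw [hXnapp, hcancel a N haN, ← hcoe₃n, hBapp]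
  -- Gram identity
  have hGram : ∀ (h : H) (a N M : ℕ), a ≤ N → N ≤ M →
      (inner ℂ (Xn M ((adjoint N₃ ^ a) (h : K))) (Xn N ((adjoint N₃ ^ a) (h : K))) : ℂ)
        = inner ℂ (A ((T₃ ^ (N - a)) h)) (A ((T₃ ^ (N - a)) h)) := by
    intro h a N M haN hNM
    rw [hXform h a N haN, hXform h a M (le_trans haN hNM)]
    obtain ⟨k, rfl⟩ : ∃ k, M = N + k := ⟨M - N, (Nat.add_sub_cancel' hNM).symm⟩
    have e1 : (adjoint N₃ ^ (N + k)) ((A ((T₃ ^ (N + k - a)) h) : K))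
        = (adjoint N₃ ^ N) ((adjoint N₃ ^ k) ((A ((T₃ ^ (N + k - a)) h) : K))) := by
      rw [pow_add]; simp only [ContinuousLinearMap.mul_apply]
    rw [e1, hinner_Vn N, hVadj k, ← hcoe₃n]
    have e2 : N + k - a = (N - a) + k := by omega
    rw [e2, ← Submodule.coe_inner]
    exact hToe k (N - a) h
  have hXnorm : ∀ (h : H) (a N : ℕ), a ≤ N →
      ‖Xn N ((adjoint N₃ ^ a) (h : K))‖ = ‖A ((T₃ ^ (N - a)) h)‖ := by
    intro h a N haN
    rw [hXform h a N haN, hnorm_V]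
    rfl
  have hsqmono : ∀ h : H, Monotone (fun m => ‖A ((T₃ ^ m) h)‖ ^ 2) := by
    intro h i j hij
    have h1 := hgmono h hij
    simp only at h1 ⊢
    nlinarith [norm_nonneg (A ((T₃ ^ i) h))]
  have hsqbdd : ∀ h : H, BddAbove (Set.range fun m => ‖A ((T₃ ^ m) h)‖ ^ 2) := by
    intro h
    refine ⟨(‖A‖ * ‖h‖) ^ 2, ?_⟩
    rintro y ⟨m, rfl⟩
    have h1 := hgbdd h m
    have h2 : (0:ℝ) ≤ ‖A‖ * ‖h‖ := by positivity
    simp only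
    nlinarith [norm_nonneg (A ((T₃ ^ m) h))]
  -- Cauchy on generators
  have hCauchyGen : ∀ (h : H) (a : ℕ), CauchySeq (fun N => Xn N ((adjoint N₃ ^ a) (h : K))) := by
    intro h a
    have hcs : CauchySeq (fun m => ‖A ((T₃ ^ m) h)‖ ^ 2) :=
      (tendsto_atTop_ciSup (hsqmono h) (hsqbdd h)).cauchySeq
    rw [Metric.cauchySeq_iff] at hcs ⊢
    intro ε hε
    obtain ⟨N₀, hN₀⟩ := hcs (ε ^ 2) (by positivity)
    refine ⟨N₀ + a, ?_⟩
    have key : ∀ p q, N₀ + a ≤ p → N₀ + a ≤ q → q ≤ p →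
        dist (Xn p ((adjoint N₃ ^ a) (h : K))) (Xn q ((adjoint N₃ ^ a) (h : K))) < ε := by
      intro p q hp hq hqp
      have hap : a ≤ p := by omega
      have haq : a ≤ q := by omega
      have hsq : dist (Xn p ((adjoint N₃ ^ a) (h : K))) (Xn q ((adjoint N₃ ^ a) (h : K))) ^ 2
          = ‖A ((T₃ ^ (p - a)) h)‖ ^ 2 - ‖A ((T₃ ^ (q - a)) h)‖ ^ 2 := by
        rw [dist_eq_norm, norm_sub_sq (𝕜 := ℂ)]
        have hre : RCLike.re (inner ℂ (Xn p ((adjoint N₃ ^ a) (h : K)))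
            (Xn q ((adjoint N₃ ^ a) (h : K))) : ℂ) = ‖A ((T₃ ^ (q - a)) h)‖ ^ 2 := by
          rw [hGram h a q p haq hqp, inner_self_eq_norm_sq]
        rw [hre, hXnorm h a p hap, hXnorm h a q haq]
        ring
      have hlt : dist (Xn p ((adjoint N₃ ^ a) (h : K))) (Xn q ((adjoint N₃ ^ a) (h : K))) ^ 2
          < ε ^ 2 := by
        rw [hsq]
        have h1 := hN₀ (p - a) (by omega) (q - a) (by omega)
        rw [Real.dist_eq] at h1
        have h2 := abs_lt.mp h1
        linarith [h2.1, h2.2]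
      exact lt_of_pow_lt_pow_left₀ 2 (le_of_lt hε) hlt
    intro m hm n hn
    rcases le_total n m with hnm | hmn
    · exact key m n hm hn hnm
    · rw [dist_comm]; exact key n m hn hm hmn
  -- moving operators past powers of adjoint N₃
  have hmove : ∀ (M : K →L[ℂ] K), M * adjoint N₃ = adjoint N₃ * M →
      ∀ (n : ℕ) (x : K), M ((adjoint N₃ ^ n) x) = (adjoint N₃ ^ n) (M x) := by
    intro M hM n
    induction n with
    | zero => intro x; simp
    | succ k ih =>
      intro x
      rw [pow_succ']
      simp only [ContinuousLinearMap.mul_apply]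
      have h1 : M ((adjoint N₃) ((adjoint N₃ ^ k) x)) = (adjoint N₃) (M ((adjoint N₃ ^ k) x)) := by
        have := congrFun (congrArg DFunLike.coe hM) ((adjoint N₃ ^ k) x)
        simpa [ContinuousLinearMap.mul_apply] using this
      rw [h1, ih]
  -- the adjoint relations
  have hadj₁ : adjoint N₁ = adjoint N₃ * N₂ := by
    have h1 : N₂ * adjoint N₃ = adjoint N₁ * (N₃ * adjoint N₃) := by
      rw [hrel₂, mul_assoc]
    rw [hU₂, mul_one] at h1
    rw [← h1, ha2V]
  have hadj₂ : adjoint N₂ = adjoint N₃ * N₁ := by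
    have h1 : N₁ * adjoint N₃ = adjoint N₂ * (N₃ * adjoint N₃) := by
      rw [hrel₁, mul_assoc]
    rw [hU₂, mul_one] at h1
    rw [← h1, ha1V]
  -- pushdown of powers of adjoints of N₁, N₂
  have hstep : ∀ (M Madj : K →L[ℂ] K) (TM : H →L[ℂ] H), adjoint Madj = adjoint N₃ * M →
      (M * adjoint N₃ = adjoint N₃ * M) → (∀ w : H, M (w : K) = ((TM w : K))) →
      ∀ (α b : ℕ) (w : H), (adjoint Madj ^ α) ((adjoint N₃ ^ b) (w : K))
        = (adjoint N₃ ^ (b + α)) (((TM ^ α) w : K)) := by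
    intro M Madj TM hadj hcm hTM α
    induction α with
    | zero => intro b w; simp
    | succ n ih =>
      intro b w
      rw [pow_succ']
      simp only [ContinuousLinearMap.mul_apply]
      rw [ih b w, hadj]
      simp only [ContinuousLinearMap.mul_apply]
      rw [hmove M hcm (b + n), hTM]
      have h2 : (adjoint N₃) ((adjoint N₃ ^ (b + n)) ((TM ((TM ^ n) w) : K)))
          = (adjoint N₃ ^ (b + n + 1)) ((TM ((TM ^ n) w) : K)) := by
        rw [pow_succ']
        rfl
      rw [h2]
      have h3 : TM ((TM ^ n) w) = (TM ^ (n + 1)) w := by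
        rw [pow_succ']
        rfl
      rw [h3, show b + (n + 1) = b + n + 1 by omega]
  have hgen_form : ∀ x ∈ {x : K | ∃ h ∈ H, ∃ α₁ α₂ α₃ : ℕ,
      x = (adjoint N₁ ^ α₁) ((adjoint N₂ ^ α₂) ((adjoint N₃ ^ α₃) h))},
      ∃ (a : ℕ) (h : H), x = (adjoint N₃ ^ a) (h : K) := by
    rintro x ⟨h, hh, α₁, α₂, α₃, rfl⟩
    have e0 : (adjoint N₃ ^ α₃) h = (adjoint N₃ ^ α₃) ((⟨h, hh⟩ : H) : K) := rfl
    rw [e0, hstep N₁ N₂ T₁ hadj₂ ha1V (fun w => (hcoe₁ w).symm) α₂ α₃ ⟨h, hh⟩,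
      hstep N₂ N₁ T₂ hadj₁ ha2V (fun w => (hcoe₂ w).symm) α₁ (α₃ + α₂) ((T₁ ^ α₂) ⟨h, hh⟩)]
    exact ⟨α₃ + α₂ + α₁, (T₂ ^ α₁) ((T₁ ^ α₂) ⟨h, hh⟩), rfl⟩
  -- Cauchy everywhere
  have hCauchyAll : ∀ x : K, CauchySeq (fun N => Xn N x) := by
    have hSmk : ∀ (x y : K), CauchySeq (fun N => Xn N x) → CauchySeq (fun N => Xn N y) →
        CauchySeq (fun N => Xn N (x + y)) := by
      intro x y hx hy
      have : (fun N => Xn N (x + y)) = (fun N => Xn N x) + (fun N => Xn N y) := by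
        funext N; simp [map_add]
      rw [this]
      exact hx.add hy
    set S : Submodule ℂ K :=
      { carrier := {x : K | CauchySeq fun N => Xn N x}
        add_mem' := fun hx hy => hSmk _ _ hx hy
        zero_mem' := by
          have : (fun N => Xn N (0 : K)) = fun _ => (0 : K) := by
            funext N; simp
          simpa [this] using cauchySeq_const (0 : K)
        smul_mem' := by
          intro c x hx
          show CauchySeq fun N => Xn N (c • x)
          have : (fun N => Xn N (c • x)) = fun N => c • Xn N x := by
            funext N; simp
          rw [this]
          exact (uniformContinuous_const_smul c).comp_cauchySeq hx } with hSdef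
    have hSspan : Submodule.span ℂ {x : K | ∃ h ∈ H, ∃ α₁ α₂ α₃ : ℕ,
        x = (adjoint N₁ ^ α₁) ((adjoint N₂ ^ α₂) ((adjoint N₃ ^ α₃) h))} ≤ S := by
      rw [Submodule.span_le]
      intro x hx
      obtain ⟨a, h, rfl⟩ := hgen_form x hx
      exact hCauchyGen h a
    intro x
    have hx : x ∈ closure ((Submodule.span ℂ {x : K | ∃ h ∈ H, ∃ α₁ α₂ α₃ : ℕ,
        x = (adjoint N₁ ^ α₁) ((adjoint N₂ ^ α₂) ((adjoint N₃ ^ α₃) h))} : Set K)) := by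
      rw [← Submodule.topologicalClosure_coe, hmin]
      trivial
    rw [Metric.cauchySeq_iff]
    intro ε hε
    have hA1 : (0:ℝ) < ‖A‖ + 1 := by positivity
    obtain ⟨y, hyS, hxy⟩ := Metric.mem_closure_iff.mp hx (ε / 3 / (‖A‖ + 1)) (by positivity)
    have hyC : CauchySeq fun N => Xn N y := hSspan hyS
    rw [Metric.cauchySeq_iff] at hyC
    obtain ⟨N₀, hN₀⟩ := hyC (ε / 3) (by positivity)
    refine ⟨N₀, fun m hm n hn => ?_⟩
    have hb : ∀ k, ‖Xn k x - Xn k y‖ ≤ ε / 3 := by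
      intro k
      have h1 : ‖Xn k x - Xn k y‖ = ‖Xn k (x - y)‖ := by rw [map_sub]
      have h2 : ‖Xn k (x - y)‖ ≤ ‖A‖ * ‖x - y‖ := hXn_bound k _
      have h3 : ‖x - y‖ < ε / 3 / (‖A‖ + 1) := by
        rw [← dist_eq_norm]; exact hxy
      have h4 : ‖A‖ * ‖x - y‖ ≤ (‖A‖ + 1) * (ε / 3 / (‖A‖ + 1)) := by
        have h0 := norm_nonneg A
        nlinarith [norm_nonneg (x - y)]
      have h5 : (‖A‖ + 1) * (ε / 3 / (‖A‖ + 1)) = ε / 3 := by field_simp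
      linarith
    have tri : dist (Xn m x) (Xn n x)
        ≤ ‖Xn m x - Xn m y‖ + (dist (Xn m y) (Xn n y) + ‖Xn n y - Xn n x‖) := by
      rw [dist_eq_norm, dist_eq_norm]
      have e : Xn m x - Xn n x = (Xn m x - Xn m y) + ((Xn m y - Xn n y) + (Xn n y - Xn n x)) := by
        abel
      rw [e]
      exact (norm_add_le _ _).trans (by gcongr; exact norm_add_le _ _)
    have h6 := hN₀ m hm n hn
    have h7 := hb m
    have h8 : ‖Xn n y - Xn n x‖ ≤ ε / 3 := by
      rw [norm_sub_rev]; exact hb n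
    linarith
  -- the limit operator
  have hexists : ∀ x : K, ∃ y : K, Tendsto (fun N => Xn N x) atTop (𝓝 y) :=
    fun x => cauchySeq_tendsto_of_complete (hCauchyAll x)
  choose Xf hXf using hexists
  have hXadd : ∀ x y : K, Xf (x + y) = Xf x + Xf y := by
    intro x y
    have h1 : Tendsto (fun N => Xn N (x + y)) atTop (𝓝 (Xf x + Xf y)) := by
      have e : (fun N => Xn N (x + y)) = fun N => Xn N x + Xn N y := by
        funext N; simp [map_add]
      rw [e]
      exact (hXf x).add (hXf y)
    exact tendsto_nhds_unique (hXf (x + y)) h1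
  have hXsmul : ∀ (c : ℂ) (x : K), Xf (c • x) = c • Xf x := by
    intro c x
    have h1 : Tendsto (fun N => Xn N (c • x)) atTop (𝓝 (c • Xf x)) := by
      have e : (fun N => Xn N (c • x)) = fun N => c • Xn N x := by
        funext N; simp
      rw [e]
      exact (hXf x).const_smul c
    exact tendsto_nhds_unique (hXf (c • x)) h1
  have hXbound : ∀ x : K, ‖Xf x‖ ≤ ‖A‖ * ‖x‖ := by
    intro x
    refine le_of_tendsto ((hXf x).norm) ?_
    exact Filter.Eventually.of_forall (fun N => hXn_bound N x)
  set Xl : K →ₗ[ℂ] K :=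
    { toFun := Xf
      map_add' := hXadd
      map_smul' := hXsmul } with hXldef
  set X : K →L[ℂ] K := LinearMap.mkContinuous Xl ‖A‖ hXbound with hXdef
  have hXapp : ∀ x : K, X x = Xf x := fun x => rfl
  -- formula with a = 0
  have hXform0 : ∀ (h : H) (N : ℕ), Xn N (h : K) = (adjoint N₃ ^ N) ((A ((T₃ ^ N) h) : K)) := by
    intro h N
    have h1 := hXform h 0 N (Nat.zero_le N)
    simpa using h1
  -- projection property
  have hproj : ∀ h : H, Submodule.orthogonalProjectionOnto H (X (h : K)) = A h := by
    intro h
    apply ext_inner_right ℂ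
    intro v
    have h1 : Tendsto (fun N => (inner ℂ (Xn N (h : K)) ((v : K)) : ℂ)) atTop
        (𝓝 (inner ℂ (X (h : K)) ((v : K)))) := by
      rw [hXapp]
      exact (hXf _).inner tendsto_const_nhds
    have h2 : ∀ N : ℕ, (inner ℂ (Xn N (h : K)) ((v : K)) : ℂ) = inner ℂ (A h) v := by
      intro N
      rw [hXform0 h N, hVadj N, ← hcoe₃n, ← Submodule.coe_inner,
        ← adjoint_inner_left (T₃ ^ N), hA₃k' N h]
    have h3 : Tendsto (fun _ : ℕ => (inner ℂ (A h) v : ℂ)) atTop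
        (𝓝 (inner ℂ (X (h : K)) ((v : K)))) := by
      exact h1.congr h2
    have h4 : (inner ℂ (X (h : K)) ((v : K)) : ℂ) = inner ℂ (A h) v :=
      tendsto_nhds_unique h3 tendsto_const_nhds
    rw [Submodule.inner_orthogonalProjectionOnto_eq_of_mem_right v (X (h : K))]
    exact h4
  -- commutation with N₃
  have hXN₃pt : ∀ x : K, X (N₃ x) = N₃ (X x) := by
    intro x
    have h1 : ∀ N : ℕ, Xn N (N₃ x) = N₃ (Xn (N + 1) x) := by
      intro N
      rw [hXnapp, hXnapp]
      have e1 : (N₃ ^ N) (N₃ x) = (N₃ ^ (N + 1)) x := by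
        rw [pow_succ]; simp only [ContinuousLinearMap.mul_apply]
      rw [e1]
      have e2 : N₃ ((adjoint N₃ ^ (N + 1)) (B ((N₃ ^ (N + 1)) x)))
          = (adjoint N₃ ^ N) (B ((N₃ ^ (N + 1)) x)) := by
        rw [pow_succ']
        simp only [ContinuousLinearMap.mul_apply]
        rw [hUV]
      rw [e2]
    have h2 : Tendsto (fun N => Xn N (N₃ x)) atTop (𝓝 (N₃ (X x))) := by
      have h3 : Tendsto (fun N => Xn (N + 1) x) atTop (𝓝 (Xf x)) :=
        (hXf x).comp (tendsto_add_atTop_nat 1)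
      have h4 : Tendsto (fun N => N₃ (Xn (N + 1) x)) atTop (𝓝 (N₃ (Xf x))) :=
        (N₃.continuous.tendsto _).comp h3
      rw [hXapp]
      exact h4.congr (fun N => (h1 N).symm)
    exact tendsto_nhds_unique (hXf (N₃ x)) h2
  -- difference of consecutive "symbols" tends to zero
  have hgdiff : ∀ h : H, Tendsto (fun m => ‖A ((T₃ ^ (m + 1)) h) - T₃ (A ((T₃ ^ m) h))‖)
      atTop (𝓝 0) := by
    intro h
    have hshift : ∀ (f : ℕ → ℝ) (L : ℝ), Tendsto f atTop (𝓝 L) →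
        Tendsto (fun m => f (m + 1) - f m) atTop (𝓝 0) := by
      intro f L hf
      have h2 : Tendsto (fun m => f (m + 1)) atTop (𝓝 L) :=
        (Filter.tendsto_add_atTop_iff_nat 1).2 hf
      have h3 := h2.sub hf
      rw [sub_self] at h3
      exact h3
    have hconv := tendsto_atTop_ciSup (hsqmono h) (hsqbdd h)
    have h1 : Tendsto (fun m => ‖A ((T₃ ^ (m + 1)) h)‖ ^ 2 - ‖A ((T₃ ^ m) h)‖ ^ 2)
        atTop (𝓝 0) := hshift (fun m => ‖A ((T₃ ^ m) h)‖ ^ 2) _ hconv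
    have hsq : ∀ m : ℕ, ‖A ((T₃ ^ (m + 1)) h) - T₃ (A ((T₃ ^ m) h))‖ ^ 2
        = ‖A ((T₃ ^ (m + 1)) h)‖ ^ 2 - ‖A ((T₃ ^ m) h)‖ ^ 2 := by
      intro m
      rw [norm_sub_sq (𝕜 := ℂ)]
      have hre : RCLike.re (inner ℂ (A ((T₃ ^ (m + 1)) h)) (T₃ (A ((T₃ ^ m) h))) : ℂ)
          = ‖A ((T₃ ^ m) h)‖ ^ 2 := by
        have h3 := hToe 1 m h
        rw [pow_one] at h3
        rw [h3, inner_self_eq_norm_sq]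
      rw [hre]
      have hTn : ‖T₃ (A ((T₃ ^ m) h))‖ = ‖A ((T₃ ^ m) h)‖ := by
        have h4 := hT₃iso 1 (A ((T₃ ^ m) h))
        rwa [pow_one] at h4
      rw [hTn]; ring
    have h5 : Tendsto (fun m => ‖A ((T₃ ^ (m + 1)) h) - T₃ (A ((T₃ ^ m) h))‖ ^ 2)
        atTop (𝓝 0) := by
      refine h1.congr fun m => ?_
      rw [hsq m]
    have h6 : Tendsto (fun m => Real.sqrt (‖A ((T₃ ^ (m + 1)) h) - T₃ (A ((T₃ ^ m) h))‖ ^ 2))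
        atTop (𝓝 (Real.sqrt 0)) := (Real.continuous_sqrt.tendsto 0).comp h5
    rw [Real.sqrt_zero] at h6
    refine h6.congr fun m => ?_
    rw [Real.sqrt_sq (norm_nonneg _)]
  -- commutation of restrictions with T₃
  have hTT : ∀ (M : K →L[ℂ] K) (TM : H →L[ℂ] H), (∀ w : H, M (w : K) = ((TM w : K))) →
      (M * N₃ = N₃ * M) → TM * T₃ = T₃ * TM := by
    intro M TM hTM hMN
    ext w
    have h1 : M (N₃ (w : K)) = N₃ (M (w : K)) := by
      have h2 := congrFun (congrArg DFunLike.coe hMN) (w : K)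
      simpa [ContinuousLinearMap.mul_apply] using h2
    show ((TM (T₃ w) : K)) = ((T₃ (TM w) : K))
    rw [← hTM, hcoe₃, hcoe₃, ← hTM]
    exact h1
  -- the main commutation lemma
  have hXMcomm : ∀ (M Msib : K →L[ℂ] K) (TM Tsib : H →L[ℂ] H),
      (M * adjoint N₃ = adjoint N₃ * M) →
      (∀ w : H, M (w : K) = ((TM w : K))) →
      (M = adjoint Msib * N₃) →
      (∀ w : H, Msib (w : K) = ((Tsib w : K))) →
      (A * TM = adjoint Tsib * A * T₃) →
      (TM * T₃ = T₃ * TM) →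
      X ∘L M = M ∘L X := by
    intro M Msib TM Tsib hcmV hM hMrel hMsib hBH hTMcomm
    -- adjoint of Tsib via projection
    have hadjTsib : ∀ w : H, adjoint Tsib w = Submodule.orthogonalProjectionOnto H (adjoint Msib (w : K)) := by
      intro w
      apply ext_inner_right ℂ
      intro v
      rw [adjoint_inner_left Tsib v w]
      rw [Submodule.coe_inner, ← hMsib v, ← adjoint_inner_left Msib (v : K) (w : K)]
      exact (Submodule.inner_orthogonalProjectionOnto_eq_of_mem_right v _).symm
    -- the symbol identity
    have hMT : ∀ (m : ℕ) (h : H), A ((T₃ ^ m) (TM h)) = adjoint Tsib (A ((T₃ ^ (m + 1)) h)) := by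
      intro m h
      have h1 : (T₃ ^ m) (TM h) = TM ((T₃ ^ m) h) := by
        have h2 : TM * T₃ ^ m = T₃ ^ m * TM := Commute.pow_right hTMcomm m
        have h3 := congrFun (congrArg DFunLike.coe h2) h
        simpa [ContinuousLinearMap.mul_apply] using h3.symm
      rw [h1]
      have h4 : A (TM ((T₃ ^ m) h)) = (adjoint Tsib * A * T₃) ((T₃ ^ m) h) := by
        have h5 := congrFun (congrArg DFunLike.coe hBH) ((T₃ ^ m) h)
        simpa [ContinuousLinearMap.mul_apply] using h5
      have h6 : T₃ ((T₃ ^ m) h) = (T₃ ^ (m + 1)) h := by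
        rw [pow_succ']; simp only [ContinuousLinearMap.mul_apply]
      rw [h4]
      simp only [ContinuousLinearMap.mul_apply]
      rw [h6]
    -- the crucial estimate
    have hest : ∀ (m : ℕ) (h : H),
        ‖((A ((T₃ ^ m) (TM h)) : K)) - ((TM (A ((T₃ ^ m) h)) : K))‖
          ≤ ‖adjoint Msib‖ * ‖A ((T₃ ^ (m + 1)) h) - T₃ (A ((T₃ ^ m) h))‖ := by
      intro m h
      have e1 : ((A ((T₃ ^ m) (TM h)) : K))
          = ((Submodule.orthogonalProjectionOnto H (adjoint Msib ((A ((T₃ ^ (m + 1)) h) : K))) : K)) := by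
        rw [hMT m h, hadjTsib]
      have e2mem : adjoint Msib ((T₃ (A ((T₃ ^ m) h)) : K)) = ((TM (A ((T₃ ^ m) h)) : K)) := by
        have h7 : M ((A ((T₃ ^ m) h) : K)) = adjoint Msib (N₃ ((A ((T₃ ^ m) h) : K))) := by
          rw [hMrel]; simp only [ContinuousLinearMap.mul_apply]
        rw [← hM, h7, ← hcoe₃]
      have e2 : ((TM (A ((T₃ ^ m) h)) : K))
          = ((Submodule.orthogonalProjectionOnto H (adjoint Msib ((T₃ (A ((T₃ ^ m) h)) : K))) : K)) := by
        rw [e2mem]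
        exact (hPr_mem _ (TM (A ((T₃ ^ m) h))).2).symm
      rw [e1, e2]
      have e3 : ((Submodule.orthogonalProjectionOnto H (adjoint Msib
            ((((A ((T₃ ^ (m + 1)) h) : K)) - ((T₃ (A ((T₃ ^ m) h)) : K))))) : K))
          = ((Submodule.orthogonalProjectionOnto H (adjoint Msib ((A ((T₃ ^ (m + 1)) h) : K))) : K))
            - ((Submodule.orthogonalProjectionOnto H (adjoint Msib ((T₃ (A ((T₃ ^ m) h)) : K))) : K)) := by
        rw [map_sub, map_sub, AddSubgroupClass.coe_sub]
      rw [← e3]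
      have e4 : (((A ((T₃ ^ (m + 1)) h) : K)) - ((T₃ (A ((T₃ ^ m) h)) : K)))
          = (((A ((T₃ ^ (m + 1)) h) - T₃ (A ((T₃ ^ m) h)) : H)) : K) :=
        (AddSubgroupClass.coe_sub _ _).symm
      calc ‖((Submodule.orthogonalProjectionOnto H (adjoint Msib
              ((((A ((T₃ ^ (m + 1)) h) : K)) - ((T₃ (A ((T₃ ^ m) h)) : K))))) : K))‖
          ≤ ‖adjoint Msib ((((A ((T₃ ^ (m + 1)) h) : K)) - ((T₃ (A ((T₃ ^ m) h)) : K))))‖ :=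
            hPr_norm _
        _ ≤ ‖adjoint Msib‖ * ‖(((A ((T₃ ^ (m + 1)) h) : K)) - ((T₃ (A ((T₃ ^ m) h)) : K)))‖ :=
            (adjoint Msib).le_opNorm _
        _ = ‖adjoint Msib‖ * ‖A ((T₃ ^ (m + 1)) h) - T₃ (A ((T₃ ^ m) h))‖ := by
            rw [e4]; rfl
    -- commutation on generators
    have hgencomm : ∀ (a : ℕ) (h : H),
        X (M ((adjoint N₃ ^ a) (h : K))) = M (X ((adjoint N₃ ^ a) (h : K))) := by
      intro a h
      have hMu : M ((adjoint N₃ ^ a) (h : K)) = (adjoint N₃ ^ a) ((TM h : K)) := by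
        rw [hmove M hcmV a, hM]
      have hc1 : Tendsto (fun N => (adjoint N₃ ^ N) ((A ((T₃ ^ (N - a)) (TM h)) : K))) atTop
          (𝓝 (X (M ((adjoint N₃ ^ a) (h : K))))) := by
        rw [hMu, hXapp]
        refine (hXf ((adjoint N₃ ^ a) ((TM h : K)))).congr' ?_
        filter_upwards [eventually_ge_atTop a] with N hN
        exact hXform (TM h) a N hN
      have hd0 : Tendsto (fun N => M (Xn N ((adjoint N₃ ^ a) (h : K)))) atTop
          (𝓝 (M (X ((adjoint N₃ ^ a) (h : K))))) := by
        rw [hXapp]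
        exact (M.continuous.tendsto _).comp (hXf _)
      have hd1 : Tendsto (fun N => (adjoint N₃ ^ N) ((TM (A ((T₃ ^ (N - a)) h)) : K))) atTop
          (𝓝 (M (X ((adjoint N₃ ^ a) (h : K))))) := by
        refine hd0.congr' ?_
        filter_upwards [eventually_ge_atTop a] with N hN
        rw [hXform h a N hN, hmove M hcmV N, hM]
      have hdiff : Tendsto (fun N => (adjoint N₃ ^ N) ((A ((T₃ ^ (N - a)) (TM h)) : K))
          - (adjoint N₃ ^ N) ((TM (A ((T₃ ^ (N - a)) h)) : K))) atTop (𝓝 0) := by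
        apply tendsto_zero_iff_norm_tendsto_zero.mpr
        have hnrm : ∀ N : ℕ, ‖(adjoint N₃ ^ N) ((A ((T₃ ^ (N - a)) (TM h)) : K))
            - (adjoint N₃ ^ N) ((TM (A ((T₃ ^ (N - a)) h)) : K))‖
            ≤ ‖adjoint Msib‖ * ‖A ((T₃ ^ (N - a + 1)) h) - T₃ (A ((T₃ ^ (N - a)) h))‖ := by
          intro N
          rw [← map_sub, hnorm_V]
          exact hest (N - a) h
        refine squeeze_zero (fun N => norm_nonneg _) hnrm ?_
        have hsubat : Tendsto (fun N : ℕ => N - a) atTop atTop := by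
          apply tendsto_atTop_atTop.mpr
          intro b
          exact ⟨b + a, fun n hn => by omega⟩
        have hcomp : Tendsto (fun N : ℕ =>
            ‖A ((T₃ ^ (N - a + 1)) h) - T₃ (A ((T₃ ^ (N - a)) h))‖) atTop (𝓝 0) :=
          (hgdiff h).comp hsubat
        have h0 := hcomp.const_mul ‖adjoint Msib‖
        simpa using h0
      have hc2 : Tendsto (fun N => (adjoint N₃ ^ N) ((A ((T₃ ^ (N - a)) (TM h)) : K))) atTop
          (𝓝 (M (X ((adjoint N₃ ^ a) (h : K))))) := by
        have h1 := hd1.add hdiff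
        rw [add_zero] at h1
        refine h1.congr fun N => ?_
        abel
      exact tendsto_nhds_unique hc1 hc2
    -- extend by density
    have hloc : Submodule.span ℂ {x : K | ∃ h ∈ H, ∃ α₁ α₂ α₃ : ℕ,
        x = (adjoint N₁ ^ α₁) ((adjoint N₂ ^ α₂) ((adjoint N₃ ^ α₃) h))}
        ≤ LinearMap.eqLocus (↑(X ∘L M) : K →ₗ[ℂ] K) (↑(M ∘L X) : K →ₗ[ℂ] K) := by
      rw [Submodule.span_le]
      intro x hx
      obtain ⟨a, h, rfl⟩ := hgen_form x hx
      show (X ∘L M) _ = (M ∘L X) _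
      simp only [ContinuousLinearMap.comp_apply]
      exact hgencomm a h
    have hclosed : IsClosed ((LinearMap.eqLocus (↑(X ∘L M) : K →ₗ[ℂ] K) (↑(M ∘L X) : K →ₗ[ℂ] K) : Submodule ℂ K) : Set K) := by
      have e : ((LinearMap.eqLocus (↑(X ∘L M) : K →ₗ[ℂ] K) (↑(M ∘L X) : K →ₗ[ℂ] K) : Submodule ℂ K) : Set K)
          = {x : K | (X ∘L M) x = (M ∘L X) x} := rfl
      rw [e]
      exact isClosed_eq (X ∘L M).continuous (M ∘L X).continuous
    have htop := Submodule.topologicalClosure_minimal _ hloc hclosed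
    rw [hmin] at htop
    ext x
    exact htop (Submodule.mem_top (x := x))
  -- the three commutations
  have hXN₁ : X ∘L N₁ = N₁ ∘L X :=
    hXMcomm N₁ N₂ T₁ T₂ ha1V (fun w => (hcoe₁ w).symm) hrel₁ (fun w => (hcoe₂ w).symm) hA₁
      (hTT N₁ T₁ (fun w => (hcoe₁ w).symm) hc13)
  have hXN₂ : X ∘L N₂ = N₂ ∘L X :=
    hXMcomm N₂ N₁ T₂ T₁ ha2V (fun w => (hcoe₂ w).symm) hrel₂ (fun w => (hcoe₁ w).symm) hA₂
      (hTT N₂ T₂ (fun w => (hcoe₂ w).symm) hc23)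
  have hXN₃ : X * N₃ = N₃ * X := by
    ext x
    simp only [ContinuousLinearMap.mul_apply]
    exact hXN₃pt x
  -- norm equality
  have hnormle : ‖X‖ ≤ ‖A‖ := LinearMap.mkContinuous_norm_le Xl (norm_nonneg A) hXbound
  have hnormge : ‖A‖ ≤ ‖X‖ := by
    apply A.opNorm_le_bound (norm_nonneg X)
    intro h
    calc ‖A h‖ = ‖Submodule.orthogonalProjectionOnto H (X ((h : K)))‖ := by rw [hproj]
      _ ≤ ‖X ((h : K))‖ := hPr_norm _
      _ ≤ ‖X‖ * ‖((h : K))‖ := X.le_opNorm _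
      _ = ‖X‖ * ‖h‖ := rfl
  exact ⟨X, hproj, hXN₁, hXN₂, hXN₃, le_antisymm hnormle hnormge⟩
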